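/- Let X be a Lefschetz complex over a ring R with unity, let 𝒱 be a multivector field on X with X invariant, and let P ⊆ Q be semi-equal index pairs for an isolated invariant set S (i.e. P₁ ⊆ Q₁, P₂ ⊆ Q₂, and either P₁ = Q₁ or P₂ = Q₂). Then H^κ(P₁,P₂) and H^κ(Q₁,Q₂) are isomorphic. -/

import Mathlib

open scoped Classical

namespace CMVF

variable {R : Type*} [Ring R] {X : Type*} [Fintype X]

/-- A Lefschetz complex over `R` with cells `X`. -/
structure Lefschetz (R : Type*) [Ring R] (X : Type*) [Fintype X] where
  dim : X → ℕ
  κ : X → X → R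
  dim_facet : ∀ x y, κ x y ≠ 0 → dim x = dim y + 1
  κ_sq : ∀ x z, (∑ y : X, κ x y * κ y z) = 0

namespace Lefschetz

variable (L : Lefschetz R X)

/-- The face order `y ≤κ x` : the partial order generated by the facet relation. -/
def le (y x : X) : Prop := Relation.ReflTransGen (fun a b => L.κ b a ≠ 0) y x

/-- Closure of a set of cells: all faces of cells of `A`. -/
def cls (A : Set X) : Set X := {z | ∃ a ∈ A, L.le z a}

/-- Closure of a single cell. -/
def clPt (x : X) : Set X := L.cls {x}

/-- The minimal open set containing `x`. -/
def opn (x : X) : Set X := {z | L.le x z}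

/-- `A` is closed. -/
def Closed (A : Set X) : Prop := L.cls A = A

/-- The mouth of `A`. -/
def mo (A : Set X) : Set X := L.cls A \ A

/-- `A` is proper: its mouth is closed. -/
def Proper (A : Set X) : Prop := L.Closed (L.mo A)

/-- Relative closure within an ambient subcomplex `W`. -/
def clsIn (W A : Set X) : Set X := L.cls A ∩ W

/-- Relative mouth within an ambient subcomplex `W`. -/
def moIn (W A : Set X) : Set X := L.clsIn W A \ A

/-- The boundary operator of the subcomplex determined by `A`
(`∂ x = ∑ y ∈ A, κ x y • y` for `x ∈ A`). -/
noncomputable def bd (A : Set X) : (X → R) →ₗ[R] (X → R) where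
  toFun f := fun y => if y ∈ A then ∑ x : X, (if x ∈ A then f x * L.κ x y else 0) else 0
  map_add' f g := by
    funext y
    by_cases hy : y ∈ A
    · simp only [hy, if_true, Pi.add_apply]
      rw [← Finset.sum_add_distrib]
      refine Finset.sum_congr rfl fun x _ => ?_
      by_cases hx : x ∈ A <;> simp [hx, add_mul]
    · simp [hy]
  map_smul' r f := by
    funext y
    by_cases hy : y ∈ A
    · simp only [hy, if_true, Pi.smul_apply, smul_eq_mul, RingHom.id_apply]
      rw [Finset.mul_sum]
      refine Finset.sum_congr rfl fun x _ => ?_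
      by_cases hx : x ∈ A <;> simp [hx, mul_assoc]
    · simp [hy]

/-- The `n`-chains of the subcomplex determined by `A`. -/
noncomputable def chainGroup (A : Set X) (n : ℕ) : Submodule R (X → R) :=
  Submodule.span R {f | ∃ x ∈ A, L.dim x = n ∧ f = Pi.single x 1}

/-- The `n`-cycles of the subcomplex determined by `A`. -/
noncomputable def cycles (A : Set X) (n : ℕ) : Submodule R (X → R) :=
  L.chainGroup A n ⊓ LinearMap.ker (L.bd A)

/-- The `n`-boundaries of the subcomplex determined by `A`. -/
noncomputable def boundaries (A : Set X) (n : ℕ) : Submodule R (X → R) :=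
  (L.chainGroup A (n + 1)).map (L.bd A)

/-- The Lefschetz homology `H^κ_n(A)` of the subcomplex determined by `A`. -/
noncomputable def homology (A : Set X) (n : ℕ) : Type _ :=
  (L.cycles A n) ⧸ ((L.boundaries A n).comap (L.cycles A n).subtype)

noncomputable instance homologyAddCommGroup (A : Set X) (n : ℕ) :
    AddCommGroup (L.homology A n) :=
  inferInstanceAs (AddCommGroup
    ((L.cycles A n) ⧸ ((L.boundaries A n).comap (L.cycles A n).subtype)))

noncomputable instance homologyModule (A : Set X) (n : ℕ) :
    Module R (L.homology A n) :=
  inferInstanceAs (Module R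
    ((L.cycles A n) ⧸ ((L.boundaries A n).comap (L.cycles A n).subtype)))

/-- `A` is a zero space: its Lefschetz homology vanishes. -/
def HomologyZero (A : Set X) : Prop := ∀ n, Subsingleton (L.homology A n)

/-- The Poincaré polynomial `p_A(t) = ∑ rank H^κ_n(A) tⁿ`. -/
noncomputable def poincare (A : Set X) : Polynomial ℕ :=
  ∑ n ∈ Finset.image L.dim Finset.univ,
    Polynomial.C (Module.finrank R (L.homology A n)) * Polynomial.X ^ n

/-- `V` is a multivector: proper, with a unique maximal element. -/
def IsMV (V : Set X) : Prop :=
  L.Proper V ∧ ∃! m, m ∈ V ∧ ∀ x ∈ V, L.le x m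

/-- A regular multivector: one with vanishing Lefschetz homology. -/
def Regular (V : Set X) : Prop := L.HomologyZero V

end Lefschetz

/-- A combinatorial multivector field on a Lefschetz complex: a partition into multivectors. -/
structure MVField {R : Type*} [Ring R] {X : Type*} [Fintype X] (L : Lefschetz R X) where
  mvs : Set (Set X)
  isMV : ∀ V ∈ mvs, L.IsMV V
  cover : ∀ x : X, ∃! V, V ∈ mvs ∧ x ∈ V

namespace MVField

variable {L : Lefschetz R X} (F : MVField L)

/-- `[x]` : the multivector containing `x`. -/
noncomputable def mclass (x : X) : Set X := (F.cover x).exists.choose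

lemma mclass_spec (x : X) : F.mclass x ∈ F.mvs ∧ x ∈ F.mclass x :=
  (F.cover x).exists.choose_spec

/-- `x★` : the dominant cell of the multivector containing `x`. -/
noncomputable def star (x : X) : X :=
  ((F.isMV _ (F.mclass_spec x).1).2).exists.choose

/-- `[x]°` : the regular part of the multivector of `x`. -/
noncomputable def regPart (x : X) : Set X :=
  if L.Regular (F.mclass x) then F.mclass x else F.mclass x \ {F.star x}

/-- The multivalued map `Π_𝒱`. -/
noncomputable def Pi (x : X) : Set X :=
  if x = F.star x then L.clPt x \ F.regPart x else {F.star x}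

/-- The multivalued map of the multivector field restricted to the subcomplex `W`. -/
noncomputable def PiIn (W : Set X) (x : X) : Set X := F.Pi x ∩ W

/-- `φ : ℤ → X` is a full solution of the multivector field restricted to `W`. -/
def IsSolIn (W : Set X) (φ : ℤ → X) : Prop := ∀ i, φ (i + 1) ∈ F.PiIn W (φ i)

/-- There is a full solution (of the field restricted to `W`) through `x` with values in `A`. -/
def FullSolThroughIn (W : Set X) (x : X) (A : Set X) : Prop :=
  ∃ φ : ℤ → X, F.IsSolIn W φ ∧ (∃ i, φ i = x) ∧ ∀ i, φ i ∈ A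

/-- `A` is `𝒱`-compatible. -/
def Compat (A : Set X) : Prop := ∀ x ∈ A, F.mclass x ⊆ A

/-- `[A]⁻` : the maximal `𝒱`-compatible subset of `A`. -/
def lowerC (A : Set X) : Set X := {x ∈ A | F.mclass x ⊆ A}

/-- `[A]⁺` : the minimal `𝒱`-compatible superset of `A`. -/
def upperC (A : Set X) : Set X := ⋃ x ∈ A, F.mclass x

/-- `Inv A`, the invariant part of `A`, computed in the subcomplex `W`. -/
def InvPartIn (W A : Set X) : Set X :=
  {x ∈ A | F.FullSolThroughIn W (F.star x) (F.lowerC A)}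

/-- `A` is invariant (within the subcomplex `W`). -/
def InvariantIn (W A : Set X) : Prop := F.InvPartIn W A = A

/-- `φ` is a path (solution) on the integer interval `[a,b]`, within the subcomplex `W`. -/
def IsPathOnIn (W : Set X) (a b : ℤ) (φ : ℤ → X) : Prop :=
  ∀ i, a ≤ i → i < b → φ (i + 1) ∈ F.PiIn W (φ i)

/-- `S` admits an internal tangency within the subcomplex `W`. -/
def HasInternalTangencyIn (W S : Set X) : Prop :=
  ∃ (a b : ℤ) (φ : ℤ → X), a ≤ b ∧ F.IsPathOnIn W a b φ ∧
    (∀ i, a ≤ i → i ≤ b → φ i ∈ L.clsIn W S) ∧ φ a ∈ S ∧ φ b ∈ S ∧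
    ∃ i, a ≤ i ∧ i ≤ b ∧ φ i ∈ L.moIn W S

/-- `S` is an isolated invariant set within the subcomplex `W`. -/
def IsoInvIn (W S : Set X) : Prop :=
  F.InvariantIn W S ∧ ¬ F.HasInternalTangencyIn W S

/-- `N` is a trapping region within the subcomplex `W`. -/
def TrappingIn (W N : Set X) : Prop :=
  N ⊆ W ∧ F.Compat N ∧ ∀ x ∈ N, F.PiIn W x ⊆ N

/-- `N` is a backward trapping region within the subcomplex `W`. -/
def BackTrappingIn (W N : Set X) : Prop :=
  N ⊆ W ∧ F.Compat N ∧ ∀ x ∈ W, ∀ y ∈ F.PiIn W x, y ∈ N → x ∈ N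

/-- `A` is an attractor within the subcomplex `W`. -/
def AttractorIn (W A : Set X) : Prop :=
  ∃ N, F.TrappingIn W N ∧ A = F.InvPartIn W N

/-- `A` is a repeller within the subcomplex `W`. -/
def RepellerIn (W A : Set X) : Prop :=
  ∃ N, F.BackTrappingIn W N ∧ A = F.InvPartIn W N

/-- The α-limit set of a full solution `φ`. -/
def alphaIn (W : Set X) (φ : ℤ → X) : Set X :=
  ⋂ k : ℕ, F.InvPartIn W (F.upperC (φ '' {i : ℤ | i ≤ -(k : ℤ)}))

/-- The ω-limit set of a full solution `φ`. -/
def omegaIn (W : Set X) (φ : ℤ → X) : Set X :=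
  ⋂ k : ℕ, F.InvPartIn W (F.upperC (φ '' {i : ℤ | (k : ℤ) ≤ i}))

/-- `C(A',A)` : the set of cells lying on connections running from `A'` to `A`. -/
def ConnIn (W A' A : Set X) : Set X :=
  {x | ∃ φ : ℤ → X, F.IsSolIn W φ ∧ (∃ i, φ i = F.star x) ∧
        F.alphaIn W φ ⊆ A' ∧ F.omegaIn W φ ⊆ A}

/-- `(A, Rp)` is an attractor-repeller pair in the subcomplex `W`. -/
def ARPairIn (W A Rp : Set X) : Prop :=
  F.AttractorIn W A ∧ F.RepellerIn W Rp ∧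
    A = F.InvPartIn W (W \ Rp) ∧ Rp = F.InvPartIn W (W \ A)

/-- `M` is a Morse decomposition of the subcomplex `W`, with admissible order `le`. -/
def MorseDecompIn (W : Set X) {P : Type*} [Finite P] (le : P → P → Prop)
    (M : P → Set X) : Prop :=
  IsPartialOrder P le ∧
  (∀ r, F.IsoInvIn W (M r)) ∧
  (∀ r r', r ≠ r' → Disjoint (M r) (M r')) ∧
  (∀ φ : ℤ → X, F.IsSolIn W φ →
    ∃ r r', le r r' ∧ F.alphaIn W φ ⊆ M r' ∧ F.omegaIn W φ ⊆ M r) ∧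
  (∀ φ : ℤ → X, F.IsSolIn W φ → ∀ r,
    F.alphaIn W φ ⊆ M r → F.omegaIn W φ ⊆ M r → Set.range φ ⊆ M r)

/-- The Morse set `M(I)` of a family of sets indexed by `I ⊆ P`. -/
def MorseSetIn (W : Set X) {P : Type*} (M : P → Set X) (I : Set P) : Set X :=
  ⋃ r ∈ I, ⋃ r' ∈ I, F.ConnIn W (M r') (M r)

/-- `(P₁, P₂)` is an index pair for the isolated invariant set `S`. -/
def IndexPair (S P₁ P₂ : Set X) : Prop :=
  L.Closed P₁ ∧ L.Closed P₂ ∧ P₂ ⊆ P₁ ∧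
  (∀ x ∈ P₂, ∀ y ∈ F.Pi x, y ∈ P₁ → y ∈ P₂) ∧
  (∀ x ∈ P₁, (∃ y ∈ F.Pi x, y ∉ P₁) → x ∈ P₂) ∧
  S = F.InvPartIn Set.univ (P₁ \ P₂)

/-- `x ⤳_A y` : there is a path of length at least two in `A` from `x★` to `y★`. -/
def PathConn (A : Set X) (x y : X) : Prop :=
  ∃ (a b : ℤ) (φ : ℤ → X), a < b ∧
    (∀ i, a ≤ i → i < b → φ (i + 1) ∈ F.Pi (φ i)) ∧
    (∀ i, a ≤ i → i ≤ b → φ i ∈ A) ∧ φ a = F.star x ∧ φ b = F.star y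

/-- The chain recurrent set. -/
def CR : Set X := {x | F.PathConn Set.univ x x}

/-- `B` is a basic set: an equivalence class of mutual connectedness in `CR`. -/
def IsBasicSet (B : Set X) : Prop :=
  ∃ x ∈ F.CR, B = {y ∈ F.CR | F.PathConn Set.univ x y ∧ F.PathConn Set.univ y x}

/-- The set `E_P` of cells of `P₁` all of whose forward solutions meet `P₂`. -/
def Ep (P₁ P₂ : Set X) : Set X :=
  {x ∈ P₁ | ∀ φ : ℕ → X, φ 0 = x → (∀ i, φ (i + 1) ∈ F.Pi (φ i)) → ∃ i, φ i ∈ P₂}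

/-- The preorder `≤_𝒱` induced by the arrows of the multivector field. -/
def leV : X → X → Prop := Relation.ReflTransGen (fun y x => y ∈ F.Pi x)

/-- The multivector field is acyclic: `≤_𝒱` is a partial order. -/
def Acyclic : Prop := ∀ x y, F.leV x y → F.leV y x → x = y

end MVField

end CMVF
namespace CMVF

variable {R : Type*} [Ring R] {X : Type*} [Fintype X]

namespace Lefschetz

variable (L : Lefschetz R X)

lemma bd_apply (A : Set X) (f : X → R) (y : X) :
    L.bd A f y = if y ∈ A then ∑ x : X, (if x ∈ A then f x * L.κ x y else 0) else 0 := rfl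

/-- The submodule of functions supported on `n`-cells of `A`. -/
noncomputable def suppMod (A : Set X) (n : ℕ) : Submodule R (X → R) where
  carrier := {f | ∀ x, f x ≠ 0 → x ∈ A ∧ L.dim x = n}
  add_mem' := by
    intro f g hf hg x hx
    by_cases h : f x = 0
    · refine hg x ?_
      intro h'
      exact hx (by simp [Pi.add_apply, h, h'])
    · exact hf x h
  zero_mem' := by intro x hx; simp at hx
  smul_mem' := by
    intro c f hf x hx
    refine hf x fun h => hx ?_
    simp [Pi.smul_apply, h]

lemma chainGroup_eq_suppMod (A : Set X) (n : ℕ) :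
    L.chainGroup A n = L.suppMod A n := by
  apply le_antisymm
  · rw [chainGroup, Submodule.span_le]
    rintro f ⟨x, hx, hdim, rfl⟩
    intro y hy
    have hxy : y = x := by
      by_contra h
      simp [Pi.single_apply, h] at hy
    subst hxy; exact ⟨hx, hdim⟩
  · intro f hf
    have hrepr : f = ∑ x : X, f x • (Pi.single x (1 : R) : X → R) := by
      funext y
      simp [Finset.sum_apply, Pi.smul_apply, Pi.single_apply, mul_ite]
    rw [hrepr]
    refine Submodule.sum_mem _ fun x _ => ?_
    by_cases hx : f x = 0
    · simp [hx]
    · exact Submodule.smul_mem _ _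
        (Submodule.subset_span ⟨x, (hf x hx).1, (hf x hx).2, rfl⟩)

lemma mem_chainGroup_iff {A : Set X} {n : ℕ} {f : X → R} :
    f ∈ L.chainGroup A n ↔ ∀ x, f x ≠ 0 → x ∈ A ∧ L.dim x = n := by
  rw [chainGroup_eq_suppMod]; rfl

/-- `B` is closed in `A`. -/
def ClosedIn (B A : Set X) : Prop :=
  B ⊆ A ∧ ∀ x ∈ B, ∀ y, L.κ x y ≠ 0 → y ∈ A → y ∈ B

/-- `A` has no "returning" facets: used for `∂∘∂ = 0`. -/
def GoodS (A : Set X) : Prop :=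
  ∀ x ∈ A, ∀ y, L.κ x y ≠ 0 → y ∉ A → ∀ z, L.κ y z ≠ 0 → z ∉ A

/-- Projection onto functions supported in `S`. -/
noncomputable def projL (_L : Lefschetz R X) (S : Set X) : (X → R) →ₗ[R] (X → R) where
  toFun f := fun x => if x ∈ S then f x else 0
  map_add' f g := by funext x; by_cases h : x ∈ S <;> simp [h]
  map_smul' c f := by funext x; by_cases h : x ∈ S <;> simp [h]

lemma projL_apply (S : Set X) (f : X → R) (x : X) :
    L.projL S f x = if x ∈ S then f x else 0 := rfl

lemma support_projL {S : Set X} {f : X → R} {x : X} (h : L.projL S f x ≠ 0) :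
    x ∈ S ∧ f x ≠ 0 := by
  by_cases hx : x ∈ S
  · exact ⟨hx, by simpa [projL_apply, hx] using h⟩
  · simp [projL_apply, hx] at h

lemma projL_eq_self {S : Set X} {f : X → R} (h : ∀ x, f x ≠ 0 → x ∈ S) :
    L.projL S f = f := by
  funext x
  by_cases hx : x ∈ S
  · simp [projL_apply, hx]
  · simp only [projL_apply, hx, if_false]
    by_contra h'
    exact hx (h x fun h'' => h' h''.symm)

lemma bd_supported {A : Set X} {n : ℕ} {f : X → R}
    (hf : ∀ x, f x ≠ 0 → x ∈ A ∧ L.dim x = n + 1) :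
    ∀ y, L.bd A f y ≠ 0 → y ∈ A ∧ L.dim y = n := by
  intro y hy
  rw [bd_apply] at hy
  by_cases hyA : y ∈ A
  · refine ⟨hyA, ?_⟩
    simp only [hyA, if_true] at hy
    obtain ⟨x, -, hx⟩ := Finset.exists_ne_zero_of_sum_ne_zero hy
    by_cases hxA : x ∈ A
    · simp only [hxA, if_true] at hx
      have hκ : L.κ x y ≠ 0 := fun h => hx (by simp [h])
      have hfx : f x ≠ 0 := fun h => hx (by simp [h])
      have := L.dim_facet x y hκ
      have := (hf x hfx).2
      omega
    · simp [hxA] at hx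
  · simp [hyA] at hy

lemma bd_mem_chainGroup {A : Set X} {n : ℕ} {f : X → R}
    (hf : f ∈ L.chainGroup A (n + 1)) : L.bd A f ∈ L.chainGroup A n := by
  rw [mem_chainGroup_iff] at hf ⊢
  exact L.bd_supported hf

lemma bd_eq_of_closedIn {B A : Set X} (h : L.ClosedIn B A) {f : X → R}
    (hf : ∀ x, f x ≠ 0 → x ∈ B) : L.bd A f = L.bd B f := by
  funext y
  rw [bd_apply, bd_apply]
  by_cases hyB : y ∈ B
  · have hyA : y ∈ A := h.1 hyB
    simp only [hyA, hyB, if_true]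
    refine Finset.sum_congr rfl fun x _ => ?_
    by_cases hxB : x ∈ B
    · simp [hxB, h.1 hxB]
    · by_cases hxA : x ∈ A
      · simp only [hxA, hxB, if_true, if_false]
        by_cases hfx : f x = 0
        · simp [hfx]
        · exact absurd (hf x hfx) hxB
      · simp [hxA, hxB]
  · by_cases hyA : y ∈ A
    · simp only [hyA, hyB, if_true, if_false]
      refine Finset.sum_eq_zero fun x _ => ?_
      by_cases hxA : x ∈ A
      · simp only [hxA, if_true]
        by_cases hfx : f x = 0
        · simp [hfx]
        · have hxB : x ∈ B := hf x hfx
          by_cases hκ : L.κ x y = 0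
          · simp [hκ]
          · exact absurd (h.2 x hxB y hκ hyA) hyB
      · simp [hxA]
    · simp [hyA, hyB]

lemma projL_bd {B A : Set X} (h : L.ClosedIn B A) {f : X → R}
    (hf : ∀ x, f x ≠ 0 → x ∈ A) :
    L.projL (A \ B) (L.bd A f) = L.bd (A \ B) (L.projL (A \ B) f) := by
  funext y
  rw [projL_apply, bd_apply, bd_apply]
  by_cases hyD : y ∈ A \ B
  · simp only [hyD, hyD.1, if_true]
    refine Finset.sum_congr rfl fun x _ => ?_
    by_cases hxD : x ∈ A \ B
    · simp [hxD, hxD.1, projL_apply]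
    · by_cases hxA : x ∈ A
      · have hxB : x ∈ B := by
          by_contra hc
          exact hxD ⟨hxA, hc⟩
        simp only [hxA, hxD, if_true, if_false]
        by_cases hκ : L.κ x y = 0
        · simp [hκ]
        · exact absurd (h.2 x hxB y hκ hyD.1) hyD.2
      · by_cases hfx : f x = 0
        · simp [hxA, hxD, hfx]
        · exact absurd (hf x hfx) hxA
  · by_cases hyA : y ∈ A
    · simp [hyD, hyA]
    · simp [hyD, hyA]

lemma bd_bd {A : Set X} (h : L.GoodS A) (f : X → R) :
    L.bd A (L.bd A f) = 0 := by
  funext z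
  rw [bd_apply]
  by_cases hzA : z ∈ A
  · simp only [hzA, if_true, Pi.zero_apply]
    have hswap : ∀ y : X, (if y ∈ A then L.bd A f y * L.κ y z else 0)
        = ∑ x : X, (if x ∈ A then f x else 0) * ((if y ∈ A then 1 else 0) * (L.κ x y * L.κ y z)) := by
      intro y
      by_cases hyA : y ∈ A
      · simp only [hyA, if_true, one_mul, bd_apply, Finset.sum_mul]
        refine Finset.sum_congr rfl fun x _ => ?_
        by_cases hxA : x ∈ A <;> simp [hxA, mul_assoc]
      · simp [hyA]
    rw [Finset.sum_congr rfl fun y _ => hswap y, Finset.sum_comm]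
    refine Finset.sum_eq_zero fun x _ => ?_
    rw [← Finset.mul_sum]
    by_cases hxA : x ∈ A
    · simp only [hxA, if_true]
      have : ∑ y : X, (if y ∈ A then (1:R) else 0) * (L.κ x y * L.κ y z)
          = ∑ y : X, L.κ x y * L.κ y z := by
        refine Finset.sum_congr rfl fun y _ => ?_
        by_cases hyA : y ∈ A
        · simp [hyA]
        · by_cases hκ1 : L.κ x y = 0
          · simp [hyA, hκ1]
          · by_cases hκ2 : L.κ y z = 0
            · simp [hyA, hκ2]
            · exact absurd hzA (h x hxA y hκ1 hyA z hκ2)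
      rw [this, L.κ_sq, mul_zero]
    · simp [hxA]
  · simp [hzA]

end Lefschetz

end CMVF
namespace CMVF

variable {R : Type*} [Ring R] {X : Type*} [Fintype X]

namespace Lefschetz

variable (L : Lefschetz R X)

lemma mem_cycles_iff {A : Set X} {n : ℕ} {f : X → R} :
    f ∈ L.cycles A n ↔ (∀ x, f x ≠ 0 → x ∈ A ∧ L.dim x = n) ∧ L.bd A f = 0 := by
  rw [cycles, Submodule.mem_inf, LinearMap.mem_ker, mem_chainGroup_iff]

lemma mem_boundaries_iff {A : Set X} {n : ℕ} {f : X → R} :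
    f ∈ L.boundaries A n ↔ ∃ g ∈ L.chainGroup A (n + 1), L.bd A g = f := by
  rw [boundaries, Submodule.mem_map]

/-- `A` is a zero space, stated concretely. -/
def ZeroH (A : Set X) : Prop := ∀ n : ℕ, ∀ f ∈ L.cycles A n, f ∈ L.boundaries A n

lemma homologyZero_iff {A : Set X} : L.HomologyZero A ↔ L.ZeroH A := by
  unfold HomologyZero homology ZeroH
  constructor
  · intro h n f hf
    have h2 : ((L.boundaries A n).comap (L.cycles A n).subtype) = ⊤ :=
      Submodule.Quotient.subsingleton_iff.mp (h n)
    have h3 : (⟨f, hf⟩ : L.cycles A n) ∈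
        ((L.boundaries A n).comap (L.cycles A n).subtype) := h2 ▸ Submodule.mem_top
    simpa [Submodule.mem_comap] using h3
  · intro h n
    refine Submodule.Quotient.subsingleton_iff.mpr ?_
    rw [Submodule.eq_top_iff']
    intro c
    exact Submodule.mem_comap.mpr (h n c.1 c.2)

lemma chainGroup_mono {B A : Set X} (h : B ⊆ A) {n : ℕ} {f : X → R}
    (hf : f ∈ L.chainGroup B n) : f ∈ L.chainGroup A n := by
  rw [mem_chainGroup_iff] at hf ⊢
  exact fun x hx => ⟨h (hf x hx).1, (hf x hx).2⟩

lemma cycles_le_of_closedIn {B A : Set X} (h : L.ClosedIn B A) (n : ℕ) :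
    L.cycles B n ≤ L.cycles A n := by
  intro f hf
  rw [mem_cycles_iff] at hf ⊢
  obtain ⟨hsupp, hbd⟩ := hf
  exact ⟨fun x hx => ⟨h.1 (hsupp x hx).1, (hsupp x hx).2⟩,
    by rw [L.bd_eq_of_closedIn h (fun x hx => (hsupp x hx).1)]; exact hbd⟩

lemma supported_in_B {B A : Set X} {n : ℕ} {f : X → R}
    (hf : f ∈ L.chainGroup A n) (hproj : L.projL (A \ B) f = 0) :
    ∀ x, f x ≠ 0 → x ∈ B := by
  intro x hx
  have hxA := (L.mem_chainGroup_iff.mp hf x hx).1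
  by_contra hxB
  have := congrFun hproj x
  rw [projL_apply] at this
  simp only [Set.mem_diff, hxA, hxB, not_false_iff, and_self, if_true, Pi.zero_apply] at this
  exact hx this

lemma projL_cycle {B A : Set X} (h : L.ClosedIn B A) {n : ℕ} {f : X → R}
    (hf : f ∈ L.cycles A n) : L.projL (A \ B) f ∈ L.cycles (A \ B) n := by
  rw [mem_cycles_iff] at hf ⊢
  obtain ⟨hsupp, hbd⟩ := hf
  constructor
  · intro x hx
    obtain ⟨hxD, hfx⟩ := L.support_projL hx
    exact ⟨hxD, (hsupp x hfx).2⟩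
  · rw [← L.projL_bd h (fun x hx => (hsupp x hx).1), hbd, map_zero]

lemma projL_boundary {B A : Set X} (h : L.ClosedIn B A) {n : ℕ} {f : X → R}
    (hf : f ∈ L.boundaries A n) : L.projL (A \ B) f ∈ L.boundaries (A \ B) n := by
  rw [mem_boundaries_iff] at hf ⊢
  obtain ⟨g, hg, rfl⟩ := hf
  refine ⟨L.projL (A \ B) g, ?_, ?_⟩
  · rw [mem_chainGroup_iff]
    intro x hx
    obtain ⟨hxD, hgx⟩ := L.support_projL hx
    exact ⟨hxD, (L.mem_chainGroup_iff.mp hg x hgx).2⟩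
  · rw [← L.projL_bd h (fun x hx => (L.mem_chainGroup_iff.mp hg x hx).1)]

/-- The key chase: if `B` is closed in `A` and the "relative" part `A \ B` has
vanishing homology, then every cycle of `A` is homologous to a cycle of `B`. -/
lemma chase_exists_rep {B A : Set X} (h : L.ClosedIn B A) (hGood : L.GoodS A)
    (hD : L.ZeroH (A \ B)) {k : ℕ} {f : X → R} (hf : f ∈ L.cycles A k) :
    ∃ f' ∈ L.cycles B k, f - f' ∈ L.boundaries A k := by
  set D := A \ B with hDdef
  have hfD : L.projL D f ∈ L.cycles D k := L.projL_cycle h hf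
  obtain ⟨g, hg, hgbd⟩ := L.mem_boundaries_iff.mp (hD k _ hfD)
  have hgA : g ∈ L.chainGroup A (k + 1) := L.chainGroup_mono Set.diff_subset hg
  have hgsupp : ∀ x, g x ≠ 0 → x ∈ D := fun x hx => (L.mem_chainGroup_iff.mp hg x hx).1
  refine ⟨f - L.bd A g, ?_, ?_⟩
  · have hmemA : f - L.bd A g ∈ L.chainGroup A k :=
      Submodule.sub_mem _ ((Submodule.mem_inf.mp hf).1) (L.bd_mem_chainGroup hgA)
    have hproj : L.projL D (f - L.bd A g) = 0 := by
      rw [map_sub, L.projL_bd h (fun x hx => (L.mem_chainGroup_iff.mp hgA x hx).1),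
        L.projL_eq_self hgsupp, hgbd, sub_self]
    have hsuppB : ∀ x, (f - L.bd A g) x ≠ 0 → x ∈ B := L.supported_in_B hmemA hproj
    rw [mem_cycles_iff]
    refine ⟨fun x hx => ⟨hsuppB x hx, (L.mem_chainGroup_iff.mp hmemA x hx).2⟩, ?_⟩
    rw [← L.bd_eq_of_closedIn h hsuppB, map_sub, L.bd_bd hGood,
      (L.mem_cycles_iff.mp hf).2, sub_zero]
  · rw [sub_sub_cancel]
    exact L.mem_boundaries_iff.mpr ⟨g, hgA, rfl⟩

/-- The key chase for injectivity. -/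
lemma chase_boundary {B A : Set X} (h : L.ClosedIn B A) (hGood : L.GoodS A)
    (hD : L.ZeroH (A \ B)) {k : ℕ} {f : X → R} (hf : f ∈ L.cycles B k)
    (hfb : f ∈ L.boundaries A k) : f ∈ L.boundaries B k := by
  set D := A \ B with hDdef
  obtain ⟨g, hg, hgbd⟩ := L.mem_boundaries_iff.mp hfb
  have hfB : ∀ x, f x ≠ 0 → x ∈ B := fun x hx => ((L.mem_cycles_iff.mp hf).1 x hx).1
  have hprojf : L.projL D f = 0 := by
    funext x
    rw [projL_apply]
    by_cases hx : x ∈ D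
    · simp only [hx, if_true, Pi.zero_apply]
      by_contra hfx
      exact hx.2 (hfB x hfx)
    · simp [hx]
  have hgD : L.projL D g ∈ L.cycles D (k + 1) := by
    rw [mem_cycles_iff]
    constructor
    · intro x hx
      obtain ⟨hxD, hgx⟩ := L.support_projL hx
      exact ⟨hxD, (L.mem_chainGroup_iff.mp hg x hgx).2⟩
    · rw [← L.projL_bd h (fun x hx => (L.mem_chainGroup_iff.mp hg x hx).1), hgbd, hprojf]
  obtain ⟨w, hw, hwbd⟩ := L.mem_boundaries_iff.mp (hD (k + 1) _ hgD)
  have hwA : w ∈ L.chainGroup A (k + 2) := L.chainGroup_mono Set.diff_subset hw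
  have hg' : g - L.bd A w ∈ L.chainGroup A (k + 1) :=
    Submodule.sub_mem _ hg (L.bd_mem_chainGroup hwA)
  have hproj : L.projL D (g - L.bd A w) = 0 := by
    rw [map_sub, L.projL_bd h (fun x hx => (L.mem_chainGroup_iff.mp hwA x hx).1),
      L.projL_eq_self (fun x hx => (L.mem_chainGroup_iff.mp hw x hx).1), hwbd, sub_self]
  have hsuppB : ∀ x, (g - L.bd A w) x ≠ 0 → x ∈ B := L.supported_in_B hg' hproj
  refine L.mem_boundaries_iff.mpr ⟨g - L.bd A w, ?_, ?_⟩
  · rw [mem_chainGroup_iff]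
    exact fun x hx => ⟨hsuppB x hx, (L.mem_chainGroup_iff.mp hg' x hx).2⟩
  · rw [← L.bd_eq_of_closedIn h hsuppB, map_sub, L.bd_bd hGood, sub_zero, hgbd]

/-- If both `B` and `A \ B` have vanishing homology, so does `A`. -/
lemma zeroH_of_closedIn {B A : Set X} (h : L.ClosedIn B A) (hGood : L.GoodS A)
    (hB : L.ZeroH B) (hD : L.ZeroH (A \ B)) : L.ZeroH A := by
  intro k f hf
  obtain ⟨f', hf', hdiff⟩ := L.chase_exists_rep h hGood hD hf
  obtain ⟨v, hv, hvbd⟩ := L.mem_boundaries_iff.mp (hB k _ hf')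
  have hvB : ∀ x, v x ≠ 0 → x ∈ B := fun x hx => (L.mem_chainGroup_iff.mp hv x hx).1
  have : L.bd A v = f' := by rw [L.bd_eq_of_closedIn h hvB, hvbd]
  obtain ⟨g, hg, hgbd⟩ := L.mem_boundaries_iff.mp hdiff
  refine L.mem_boundaries_iff.mpr ⟨g + v, Submodule.add_mem _ hg (L.chainGroup_mono h.1 hv), ?_⟩
  rw [map_add, hgbd, this, sub_add_cancel]

end Lefschetz

end CMVF
namespace CMVF

variable {R : Type*} [Ring R] {X : Type*} [Fintype X]

namespace Lefschetz

variable (L : Lefschetz R X)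

lemma chase_proj_boundary {B A : Set X} (h : L.ClosedIn B A) (hGood : L.GoodS A)
    (hB : L.ZeroH B) {k : ℕ} {f : X → R} (hf : f ∈ L.cycles A k)
    (hfb : L.projL (A \ B) f ∈ L.boundaries (A \ B) k) : f ∈ L.boundaries A k := by
  set D := A \ B with hDdef
  obtain ⟨w, hw, hwbd⟩ := L.mem_boundaries_iff.mp hfb
  have hwA : w ∈ L.chainGroup A (k + 1) := L.chainGroup_mono Set.diff_subset hw
  have hu : f - L.bd A w ∈ L.chainGroup A k :=
    Submodule.sub_mem _ (Submodule.mem_inf.mp hf).1 (L.bd_mem_chainGroup hwA)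
  have hproj : L.projL D (f - L.bd A w) = 0 := by
    rw [map_sub, L.projL_bd h (fun x hx => (L.mem_chainGroup_iff.mp hwA x hx).1),
      L.projL_eq_self (fun x hx => (L.mem_chainGroup_iff.mp hw x hx).1), hwbd, sub_self]
  have hsuppB : ∀ x, (f - L.bd A w) x ≠ 0 → x ∈ B := L.supported_in_B hu hproj
  have hcyc : f - L.bd A w ∈ L.cycles B k := by
    rw [mem_cycles_iff]
    refine ⟨fun x hx => ⟨hsuppB x hx, (L.mem_chainGroup_iff.mp hu x hx).2⟩, ?_⟩
    rw [← L.bd_eq_of_closedIn h hsuppB, map_sub, L.bd_bd hGood,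
      (L.mem_cycles_iff.mp hf).2, sub_zero]
  obtain ⟨v, hv, hvbd⟩ := L.mem_boundaries_iff.mp (hB k _ hcyc)
  refine L.mem_boundaries_iff.mpr ⟨w + v, Submodule.add_mem _ hwA (L.chainGroup_mono h.1 hv), ?_⟩
  have : L.bd A v = f - L.bd A w := by
    rw [L.bd_eq_of_closedIn h (fun x hx => (L.mem_chainGroup_iff.mp hv x hx).1), hvbd]
  rw [map_add, this, add_sub_cancel]

lemma chase_proj_surj {B A : Set X} (h : L.ClosedIn B A) (hGood : L.GoodS A)
    (hB : L.ZeroH B) {k : ℕ} {f : X → R} (hf : f ∈ L.cycles (A \ B) k) :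
    ∃ f' ∈ L.cycles A k, L.projL (A \ B) f' = f := by
  set D := A \ B with hDdef
  have hfD : ∀ x, f x ≠ 0 → x ∈ D := fun x hx => ((L.mem_cycles_iff.mp hf).1 x hx).1
  have hfA : f ∈ L.chainGroup A k :=
    L.chainGroup_mono Set.diff_subset (Submodule.mem_inf.mp hf).1
  have hprojf : L.projL D f = f := L.projL_eq_self hfD
  cases k with
  | zero =>
    refine ⟨f, ?_, hprojf⟩
    rw [mem_cycles_iff]
    refine ⟨fun x hx => (L.mem_chainGroup_iff.mp hfA x hx), ?_⟩
    funext y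
    rw [bd_apply]
    by_cases hy : y ∈ A
    · simp only [hy, if_true, Pi.zero_apply]
      refine Finset.sum_eq_zero fun x _ => ?_
      by_cases hx : x ∈ A
      · simp only [hx, if_true]
        by_cases hfx : f x = 0
        · simp [hfx]
        · by_cases hκ : L.κ x y = 0
          · simp [hκ]
          · have h1 := L.dim_facet x y hκ
            have h2 := (L.mem_chainGroup_iff.mp hfA x hfx).2
            omega
      · simp [hx]
    · simp [hy]
  | succ n =>
    have hrA : L.bd A f ∈ L.chainGroup A n := L.bd_mem_chainGroup hfA
    have hrproj : L.projL D (L.bd A f) = 0 := by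
      rw [L.projL_bd h (fun x hx => (L.mem_chainGroup_iff.mp hfA x hx).1), hprojf,
        (L.mem_cycles_iff.mp hf).2]
    have hrB : ∀ x, L.bd A f x ≠ 0 → x ∈ B := L.supported_in_B hrA hrproj
    have hrcyc : L.bd A f ∈ L.cycles B n := by
      rw [mem_cycles_iff]
      refine ⟨fun x hx => ⟨hrB x hx, (L.mem_chainGroup_iff.mp hrA x hx).2⟩, ?_⟩
      rw [← L.bd_eq_of_closedIn h hrB, L.bd_bd hGood]
    obtain ⟨s, hs, hsbd⟩ := L.mem_boundaries_iff.mp (hB n _ hrcyc)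
    have hsB : ∀ x, s x ≠ 0 → x ∈ B := fun x hx => (L.mem_chainGroup_iff.mp hs x hx).1
    refine ⟨f - s, ?_, ?_⟩
    · rw [mem_cycles_iff]
      have hmem : f - s ∈ L.chainGroup A (n + 1) :=
        Submodule.sub_mem _ hfA (L.chainGroup_mono h.1 hs)
      refine ⟨fun x hx => L.mem_chainGroup_iff.mp hmem x hx, ?_⟩
      rw [map_sub, ← L.bd_eq_of_closedIn h hsB] at *
      rw [hsbd, sub_self]
    · rw [map_sub, hprojf]
      have : L.projL D s = 0 := by
        funext x
        rw [projL_apply]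
        by_cases hx : x ∈ D
        · simp only [hx, if_true, Pi.zero_apply]
          by_contra hsx
          exact hx.2 (hsB x hsx)
        · simp [hx]
      rw [this, sub_zero]

/-- Inclusion induces an isomorphism in homology when the relative part is acyclic. -/
lemma homology_equiv_incl {B A : Set X} (h : L.ClosedIn B A) (hGood : L.GoodS A)
    (hD : L.ZeroH (A \ B)) (k : ℕ) :
    Nonempty (L.homology B k ≃ₗ[R] L.homology A k) := by
  have hle := L.cycles_le_of_closedIn h k
  have hcom : (L.boundaries B k).comap (L.cycles B k).subtype ≤
      ((L.boundaries A k).comap (L.cycles A k).subtype).comap (Submodule.inclusion hle) := by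
    intro c hc
    simp only [Submodule.mem_comap, Submodule.coe_subtype, Submodule.coe_inclusion] at hc ⊢
    obtain ⟨g, hg, hgbd⟩ := L.mem_boundaries_iff.mp hc
    refine L.mem_boundaries_iff.mpr ⟨g, L.chainGroup_mono h.1 hg, ?_⟩
    rw [L.bd_eq_of_closedIn h (fun x hx => (L.mem_chainGroup_iff.mp hg x hx).1), hgbd]
  refine ⟨LinearEquiv.ofBijective (Submodule.mapQ _ _ (Submodule.inclusion hle) hcom)
    ⟨?_, ?_⟩⟩
  · intro a b hab
    obtain ⟨ca, rfl⟩ := Submodule.Quotient.mk_surjective _ a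
    obtain ⟨cb, rfl⟩ := Submodule.Quotient.mk_surjective _ b
    rw [Submodule.mapQ_apply, Submodule.mapQ_apply, Submodule.Quotient.eq] at hab
    rw [Submodule.Quotient.eq]
    have h1 : ((ca - cb : L.cycles B k) : X → R) ∈ L.boundaries A k := by
      have := Submodule.mem_comap.mp hab
      simpa [map_sub] using this
    exact Submodule.mem_comap.mpr
      (L.chase_boundary h hGood hD (ca - cb).2 h1)
  · intro c
    obtain ⟨⟨f, hf⟩, rfl⟩ := Submodule.Quotient.mk_surjective _ c
    obtain ⟨f', hf', hdiff⟩ := L.chase_exists_rep h hGood hD hf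
    refine ⟨Submodule.Quotient.mk ⟨f', hf'⟩, ?_⟩
    rw [Submodule.mapQ_apply, Submodule.Quotient.eq]
    refine Submodule.mem_comap.mpr ?_
    have : ((Submodule.inclusion hle ⟨f', hf'⟩ - ⟨f, hf⟩ : L.cycles A k) : X → R) = f' - f := rfl
    rw [Submodule.coe_subtype, this]
    have := Submodule.neg_mem _ hdiff
    simpa using this


/-- Projection induces an isomorphism in homology when the closed part is acyclic. -/
lemma homology_equiv_proj {B A : Set X} (h : L.ClosedIn B A) (hGood : L.GoodS A)
    (hB : L.ZeroH B) (k : ℕ) :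
    Nonempty (L.homology A k ≃ₗ[R] L.homology (A \ B) k) := by
  set D := A \ B with hDdef
  have hmem : ∀ c : L.cycles A k, L.projL D (c : X → R) ∈ L.cycles D k :=
    fun c => L.projL_cycle h c.2
  let π : L.cycles A k →ₗ[R] L.cycles D k :=
    (L.projL D ∘ₗ (L.cycles A k).subtype).codRestrict _ hmem
  have hπ : ∀ c : L.cycles A k, (π c : X → R) = L.projL D (c : X → R) := fun c => rfl
  have hcom : (L.boundaries A k).comap (L.cycles A k).subtype ≤
      ((L.boundaries D k).comap (L.cycles D k).subtype).comap π := by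
    intro c hc
    simp only [Submodule.mem_comap, Submodule.coe_subtype] at hc ⊢
    rw [hπ]
    exact L.projL_boundary h hc
  refine ⟨LinearEquiv.ofBijective (Submodule.mapQ _ _ π hcom) ⟨?_, ?_⟩⟩
  · intro a b hab
    obtain ⟨ca, rfl⟩ := Submodule.Quotient.mk_surjective _ a
    obtain ⟨cb, rfl⟩ := Submodule.Quotient.mk_surjective _ b
    rw [Submodule.mapQ_apply, Submodule.mapQ_apply, Submodule.Quotient.eq] at hab
    rw [Submodule.Quotient.eq]
    have h1 : L.projL D ((ca - cb : L.cycles A k) : X → R) ∈ L.boundaries D k := by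
      have h2 := Submodule.mem_comap.mp hab
      rw [Submodule.coe_subtype] at h2
      have h3 : ((π ca - π cb : L.cycles D k) : X → R)
          = L.projL D ((ca - cb : L.cycles A k) : X → R) := by
        rw [← map_sub]
        exact hπ _
      rwa [h3] at h2
    exact Submodule.mem_comap.mpr
      (L.chase_proj_boundary h hGood hB (ca - cb).2 h1)
  · intro c
    obtain ⟨⟨f, hf⟩, rfl⟩ := Submodule.Quotient.mk_surjective _ c
    obtain ⟨f', hf', hproj⟩ := L.chase_proj_surj h hGood hB hf
    refine ⟨Submodule.Quotient.mk ⟨f', hf'⟩, ?_⟩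
    rw [Submodule.mapQ_apply]
    congr 1
    exact Subtype.ext (by rw [hπ]; exact hproj)

end Lefschetz

end CMVF
namespace CMVF

variable {R : Type*} [Ring R] {X : Type*} [Fintype X]

namespace Lefschetz

variable (L : Lefschetz R X)

lemma le_refl' (x : X) : L.le x x := Relation.ReflTransGen.refl

lemma le_facet {x y : X} (h : L.κ x y ≠ 0) : L.le y x := Relation.ReflTransGen.single h

lemma le_trans' {x y z : X} (h1 : L.le x y) (h2 : L.le y z) : L.le x z :=
  Relation.ReflTransGen.trans h1 h2

lemma mem_of_closed_of_le {P : Set X} (hP : L.Closed P) {x y : X} (hx : x ∈ P)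
    (h : L.le y x) : y ∈ P := by
  have : y ∈ L.cls P := ⟨x, hx, h⟩
  rwa [hP] at this

lemma goodS_diff {U V : Set X} (hU : L.Closed U) (hV : L.Closed V) : L.GoodS (U \ V) := by
  rintro x ⟨hxU, hxV⟩ y hκ hy z hκz ⟨hzU, hzV⟩
  have hyU : y ∈ U := L.mem_of_closed_of_le hU hxU (L.le_facet hκ)
  have hyV : y ∈ V := by
    by_contra hyV
    exact hy ⟨hyU, hyV⟩
  exact hzV (L.mem_of_closed_of_le hV hyV (L.le_facet hκz))

end Lefschetz

namespace MVField

variable {L : Lefschetz R X} (F : MVField L)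

lemma mem_mclass (x : X) : x ∈ F.mclass x := (F.mclass_spec x).2

lemma mclass_mem_mvs (x : X) : F.mclass x ∈ F.mvs := (F.mclass_spec x).1

lemma mclass_eq_of_mem {V : Set X} (hV : V ∈ F.mvs) {x : X} (hx : x ∈ V) :
    F.mclass x = V :=
  (F.cover x).unique ⟨F.mclass_mem_mvs x, F.mem_mclass x⟩ ⟨hV, hx⟩

lemma mclass_eq_mclass_of_mem {x y : X} (h : y ∈ F.mclass x) :
    F.mclass y = F.mclass x :=
  F.mclass_eq_of_mem (F.mclass_mem_mvs x) h

lemma star_spec (x : X) :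
    F.star x ∈ F.mclass x ∧ ∀ z ∈ F.mclass x, L.le z (F.star x) :=
  ((F.isMV _ (F.mclass_spec x).1).2).exists.choose_spec

lemma star_mem (x : X) : F.star x ∈ F.mclass x := (F.star_spec x).1

lemma le_star {x z : X} (h : z ∈ F.mclass x) : L.le z (F.star x) :=
  (F.star_spec x).2 z h

lemma star_eq_of_mclass_eq {x y : X} (h : F.mclass x = F.mclass y) :
    F.star x = F.star y := by
  have u := (F.isMV _ (F.mclass_spec x).1).2
  refine u.unique ⟨F.star_mem x, fun z hz => F.le_star hz⟩ ⟨?_, ?_⟩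
  · rw [h]; exact F.star_mem y
  · intro z hz
    rw [h] at hz
    exact F.le_star hz

lemma star_star (x : X) : F.star (F.star x) = F.star x :=
  F.star_eq_of_mclass_eq (F.mclass_eq_mclass_of_mem (F.star_mem x))

lemma pi_of_ne_star {x : X} (h : x ≠ F.star x) : F.Pi x = {F.star x} := if_neg h

lemma star_mem_pi_self {x : X} (hx : x = F.star x)
    (hreg : ¬ L.Regular (F.mclass x)) : x ∈ F.Pi x := by
  rw [Pi, if_pos hx]
  refine ⟨⟨x, rfl, Relation.ReflTransGen.refl⟩, ?_⟩
  rw [regPart, if_neg hreg]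
  rintro ⟨-, hmem⟩
  exact hmem (by rw [← hx]; rfl)

lemma mem_pi_star {x w : X} (hw : w ∈ L.cls (F.mclass x)) (hw2 : w ∉ F.mclass x) :
    w ∈ F.Pi (F.star x) := by
  rw [Pi, if_pos (F.star_star x).symm]
  constructor
  · obtain ⟨a, ha, hle⟩ := hw
    exact ⟨F.star x, rfl, L.le_trans' hle (F.le_star ha)⟩
  · intro hmem
    apply hw2
    have hsub : F.regPart (F.star x) ⊆ F.mclass (F.star x) := by
      rw [regPart]
      split
      · exact subset_rfl
      · exact Set.diff_subset
    have := hsub hmem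
    rwa [F.mclass_eq_mclass_of_mem (F.star_mem x)] at this

end MVField

end CMVF
namespace CMVF

variable {R : Type*} [Ring R] {X : Type*} [Fintype X]

/-- A solution path of positive length in `A` from `a` to `b`. -/
def PathIn {L : Lefschetz R X} (F : MVField L) (A : Set X) (a b : X) : Prop :=
  ∃ (m : ℕ) (φ : ℕ → X), 0 < m ∧ φ 0 = a ∧ φ m = b ∧
    (∀ i < m, φ (i + 1) ∈ F.Pi (φ i)) ∧ (∀ i ≤ m, φ i ∈ A)

lemma PathIn.trans {L : Lefschetz R X} {F : MVField L} {A : Set X} {a b c : X}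
    (p : PathIn F A a b) (q : PathIn F A b c) : PathIn F A a c := by
  obtain ⟨m, φ, hm, h0, hmb, hstep, hval⟩ := p
  obtain ⟨n, ψ, hn, k0, knc, kstep, kval⟩ := q
  refine ⟨m + n, fun i => if i ≤ m then φ i else ψ (i - m), by omega, ?_, ?_, ?_, ?_⟩
  · simp [h0]
  · beta_reduce
    rw [if_neg (by omega : ¬ (m + n ≤ m)), show m + n - m = n by omega]
    exact knc
  · intro i hi
    beta_reduce
    by_cases h1 : i < m
    · rw [if_pos (by omega : i + 1 ≤ m), if_pos (by omega : i ≤ m)]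
      exact hstep i h1
    · by_cases h2 : i = m
      · rw [if_neg (by omega : ¬ (i + 1 ≤ m)), if_pos (by omega : i ≤ m),
          show i + 1 - m = 1 by omega, h2, hmb, ← k0]
        exact kstep 0 hn
      · rw [if_neg (by omega : ¬ (i + 1 ≤ m)), if_neg (by omega : ¬ (i ≤ m)),
          show i + 1 - m = (i - m) + 1 by omega]
        exact kstep (i - m) (by omega)
  · intro i hi
    beta_reduce
    by_cases h1 : i ≤ m
    · rw [if_pos h1]; exact hval i h1
    · rw [if_neg h1]; exact kval (i - m) (by omega)

lemma path_of_step (L : Lefschetz R X) (F : MVField L) (A : Set X)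
    (hcomp : ∀ x ∈ A, F.mclass x ⊆ A) {x y : X} (hx : x ∈ A) (hy : y ∈ A)
    (hne : F.mclass y ≠ F.mclass x)
    (hw : (L.cls (F.mclass x) ∩ F.mclass y).Nonempty) :
    PathIn F A (F.star x) (F.star y) := by
  obtain ⟨w, hwc, hwy⟩ := hw
  have hwA : w ∈ A := hcomp y hy hwy
  have hwnx : w ∉ F.mclass x := fun hmem =>
    hne (by rw [← F.mclass_eq_mclass_of_mem hwy, F.mclass_eq_mclass_of_mem hmem])
  have hwpi : w ∈ F.Pi (F.star x) := F.mem_pi_star hwc hwnx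
  have hsw : F.star w = F.star y := F.star_eq_of_mclass_eq (F.mclass_eq_mclass_of_mem hwy)
  have hsxA : F.star x ∈ A := hcomp x hx (F.star_mem x)
  have hsyA : F.star y ∈ A := hcomp y hy (F.star_mem y)
  by_cases hcase : w = F.star y
  · refine ⟨1, fun n => if n = 0 then F.star x else F.star y, one_pos, by simp, by simp,
      ?_, ?_⟩
    · intro i hi
      interval_cases i
      simpa using (hcase ▸ hwpi)
    · intro i hi
      interval_cases i
      · simpa using hsxA
      · simpa using hsyA
  · refine ⟨2, fun n => if n = 0 then F.star x else if n = 1 then w else F.star y,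
      two_pos, by simp, by simp, ?_, ?_⟩
    · intro i hi
      interval_cases i
      · simpa using hwpi
      · have hwne : w ≠ F.star w := by rw [hsw]; exact hcase
        have : F.Pi w = {F.star w} := F.pi_of_ne_star hwne
        simp only [show (1:ℕ) + 1 = 2 by rfl]
        norm_num
        rw [this, hsw]
        rfl
    · intro i hi
      interval_cases i
      · simpa using hsxA
      · simpa using hwA
      · simpa using hsyA

/-- The "closure" relation on multivectors contained in `A`. -/
def clsRel (L : Lefschetz R X) (F : MVField L) (A : Set X) : Set X → Set X → Prop :=
  fun W V => W ≠ V ∧ (∃ x ∈ A, W = F.mclass x) ∧ (∃ x ∈ A, V = F.mclass x) ∧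
    (L.cls V ∩ W).Nonempty

lemma path_of_transGen (L : Lefschetz R X) (F : MVField L) (A : Set X)
    (hcomp : ∀ x ∈ A, F.mclass x ⊆ A) {W V : Set X}
    (h : Relation.TransGen (clsRel L F A) W V) :
    ∀ x ∈ A, V = F.mclass x → ∀ y ∈ A, W = F.mclass y →
      PathIn F A (F.star x) (F.star y) := by
  induction h with
  | single h =>
    intro x hx hV y hy hW
    refine path_of_step L F A hcomp hx hy ?_ ?_
    · rw [← hV, ← hW]; exact h.1
    · rw [← hV, ← hW]; exact h.2.2.2
  | tail hWb hbV ih =>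
    intro x hx hV y hy hW
    obtain ⟨z, hz, hb⟩ := hbV.2.1
    refine (path_of_step L F A hcomp hx hz ?_ ?_).trans (ih z hz hb y hy hW)
    · rw [← hV, ← hb]; exact hbV.1
    · rw [← hV, ← hb]; exact hbV.2.2.2

lemma mem_invPart_of_cycle {L : Lefschetz R X} (F : MVField L) {N A : Set X} {a : X}
    (ha : F.star a = a) (hsub : A ⊆ F.lowerC N) (haN : a ∈ N)
    {m : ℕ} (hm : 0 < m) {φ : ℕ → X} (h0 : φ 0 = a) (hme : φ m = a)
    (hstep : ∀ i < m, φ (i + 1) ∈ F.Pi (φ i)) (hval : ∀ i ≤ m, φ i ∈ A) :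
    a ∈ F.InvPartIn Set.univ N := by
  have hm' : (0 : ℤ) < (m : ℤ) := by exact_mod_cast hm
  have hr : ∀ i : ℤ, 0 ≤ i % (m:ℤ) ∧ i % (m:ℤ) < m :=
    fun i => ⟨Int.emod_nonneg i (by omega), Int.emod_lt_of_pos i hm'⟩
  refine ⟨haN, fun i => φ (i% (m:ℤ)).toNat, ?_, ⟨0, ?_⟩, ?_⟩
  · intro i
    refine Set.mem_inter ?_ trivial
    have h1 : (i + 1) % (m:ℤ) = (i % (m:ℤ) + 1) % (m:ℤ) := by
      have h2 : i % (m:ℤ) + 1 + (m : ℤ) * (i / m) = i + 1 := by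
        have h3 := Int.emod_add_mul_ediv i m
        linarith
      rw [← h2, Int.add_mul_emod_self_left]
    have hjm : (i% (m:ℤ)).toNat < m := by
      have := hr i; omega
    have hnn : 0 ≤ i % (m:ℤ) := (hr i).1
    show φ (((i + 1) % (m:ℤ)).toNat) ∈ F.Pi (φ ((i % (m:ℤ)).toNat))
    by_cases hcase : (i% (m:ℤ)).toNat + 1 = m
    · have h4 : (i + 1) % (m:ℤ) = 0 := by
        rw [h1, show i % (m:ℤ) + 1 = (m : ℤ) by omega, Int.emod_self]
      have e1 : φ ((i + 1)% (m:ℤ)).toNat = φ ((i% (m:ℤ)).toNat + 1) := by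
        rw [h4, hcase]
        simp only [Int.toNat_zero]
        rw [h0, hme]
      rw [e1]
      exact hstep _ hjm
    · have h4 : (i + 1) % (m:ℤ) = i % (m:ℤ) + 1 := by
        rw [h1]
        exact Int.emod_eq_of_lt (by omega) (by omega)
      have e1 : φ ((i + 1)% (m:ℤ)).toNat = φ ((i% (m:ℤ)).toNat + 1) := by
        rw [h4]; congr 1; omega
      rw [e1]
      exact hstep _ (by omega)
  · show φ ((0 : ℤ)% (m:ℤ)).toNat = F.star a
    rw [Int.zero_emod]
    simp only [Int.toNat_zero]
    rw [h0, ha]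
  · intro i
    have := hr i
    exact hsub (hval _ (by omega))

lemma dynamical_facts (L : Lefschetz R X) (F : MVField L) (S N N' A : Set X)
    (hAN : A ⊆ N) (hcomp : ∀ x ∈ A, F.mclass x ⊆ A)
    (hS1 : S = F.InvPartIn Set.univ N) (hS2 : S = F.InvPartIn Set.univ N')
    (hdisj : ∀ x ∈ A, x ∉ N') :
    (∀ x ∈ A, L.HomologyZero (F.mclass x)) ∧
    (∀ V, ¬ Relation.TransGen (clsRel L F A) V V) := by
  have hsub : A ⊆ F.lowerC N := fun z hz => ⟨hAN hz, (hcomp z hz).trans hAN⟩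
  have hkill : ∀ x ∈ A, x ∈ F.InvPartIn Set.univ N → False := by
    intro x hxA hxI
    have hxS : x ∈ S := by rw [hS1]; exact hxI
    have hx' : x ∈ F.InvPartIn Set.univ N' := by rw [← hS2]; exact hxS
    exact hdisj x hxA hx'.1
  constructor
  · intro x hxA
    by_contra hcrit
    have haA : F.star x ∈ A := hcomp x hxA (F.star_mem x)
    have hsa : F.star (F.star x) = F.star x := F.star_star x
    have hpia : F.star x ∈ F.Pi (F.star x) := by
      apply F.star_mem_pi_self hsa.symm
      rw [F.mclass_eq_mclass_of_mem (F.star_mem x)]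
      exact hcrit
    refine hkill (F.star x) haA ?_
    exact mem_invPart_of_cycle F hsa hsub (hAN haA) one_pos (φ := fun _ => F.star x) rfl rfl
      (fun i _ => hpia) (fun i _ => haA)
  · intro V hV
    have hrep : ∃ x ∈ A, V = F.mclass x := by
      cases hV with
      | single h => exact h.2.2.1
      | tail h hstep => exact hstep.2.2.1
    obtain ⟨x, hxA, hVx⟩ := hrep
    obtain ⟨m, φ, hm, h0, hme, hstep, hval⟩ :=
      path_of_transGen L F A hcomp hV x hxA hVx x hxA hVx
    have haA : F.star x ∈ A := hcomp x hxA (F.star_mem x)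
    exact hkill (F.star x) haA
      (mem_invPart_of_cycle F (F.star_star x) hsub (hAN haA) hm h0 hme hstep hval)

end CMVF
namespace CMVF

variable {R : Type*} [Ring R] {X : Type*} [Fintype X]

lemma zeroH_empty (L : Lefschetz R X) : L.ZeroH (∅ : Set X) := by
  intro n f hf
  have hf0 : f = 0 := by
    funext x
    by_contra hx
    exact absurd ((L.mem_cycles_iff.mp hf).1 x hx).1 (Set.notMem_empty x)
  rw [hf0]
  exact Submodule.zero_mem _

lemma zeroH_of_regular (L : Lefschetz R X) (F : MVField L) :
    ∀ (n : ℕ) (A : Set X), A.ncard ≤ n → L.GoodS A →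
      (∀ x ∈ A, F.mclass x ⊆ A) → (∀ x ∈ A, L.HomologyZero (F.mclass x)) →
      (∀ V, ¬ Relation.TransGen (clsRel L F A) V V) → L.ZeroH A := by
  intro n
  induction n with
  | zero =>
    intro A hcard _ _ _ _
    have hA : A = ∅ := (Set.ncard_eq_zero (Set.toFinite A)).mp (by omega)
    rw [hA]
    exact zeroH_empty L
  | succ n ih =>
    intro A hcard hGood hcomp hreg hacyc
    rcases Set.eq_empty_or_nonempty A with hA | ⟨x₀, hx₀⟩
    · rw [hA]; exact zeroH_empty L
    · haveI : IsTrans (Set X) (Relation.TransGen (clsRel L F A)) :=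
        ⟨fun _ _ _ => Relation.TransGen.trans⟩
      haveI : IsIrrefl (Set X) (Relation.TransGen (clsRel L F A)) := ⟨hacyc⟩
      have hwf : WellFounded (Relation.TransGen (clsRel L F A)) :=
        Finite.wellFounded_of_trans_of_irrefl _
      obtain ⟨V, hV, hmin⟩ := hwf.has_min {V | ∃ x ∈ A, V = F.mclass x}
        ⟨F.mclass x₀, x₀, hx₀, rfl⟩
      obtain ⟨x₁, hx₁, rfl⟩ := hV
      have hVsub : F.mclass x₁ ⊆ A := hcomp x₁ hx₁
      have hClosedIn : L.ClosedIn (F.mclass x₁) A := by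
        refine ⟨hVsub, fun x hxV y hκ hyA => ?_⟩
        by_contra hyV
        have hne : F.mclass y ≠ F.mclass x₁ := fun he => hyV (he ▸ F.mem_mclass y)
        refine hmin (F.mclass y) ⟨y, hyA, rfl⟩ (Relation.TransGen.single ?_)
        exact ⟨hne, ⟨y, hyA, rfl⟩, ⟨x₁, hx₁, rfl⟩,
          ⟨y, ⟨x, hxV, L.le_facet hκ⟩, F.mem_mclass y⟩⟩
      have hcard' : (A \ F.mclass x₁).ncard ≤ n := by
        have hss : A \ F.mclass x₁ ⊂ A := by
          rw [Set.ssubset_iff_subset_ne]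
          refine ⟨Set.diff_subset, fun he => ?_⟩
          have hx₁' : x₁ ∈ A \ F.mclass x₁ := by rw [he]; exact hx₁
          exact hx₁'.2 (F.mem_mclass x₁)
        have := Set.ncard_lt_ncard hss (Set.toFinite A)
        omega
      have hD : L.ZeroH (A \ F.mclass x₁) := by
        apply ih _ hcard'
        · rintro x hx y hκ hy z hκz ⟨hzA, hzV⟩
          by_cases hyA : y ∈ A
          · have hyV : y ∈ F.mclass x₁ := by
              by_contra hyV
              exact hy ⟨hyA, hyV⟩
            exact hzV (hClosedIn.2 y hyV z hκz hzA)
          · exact (hGood x hx.1 y hκ hyA z hκz) hzA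
        · intro x hx z hz
          refine ⟨hcomp x hx.1 hz, fun hzV => hx.2 ?_⟩
          have h1 := F.mclass_eq_mclass_of_mem hz
          have h2 := F.mclass_eq_mclass_of_mem hzV
          have h3 : F.mclass x = F.mclass x₁ := by rw [← h1, h2]
          exact h3 ▸ F.mem_mclass x
        · exact fun x hx => hreg x hx.1
        · intro W hW
          refine hacyc W (Relation.TransGen.mono ?_ _ _ hW)
          rintro a b ⟨h1, ⟨u, hu, hua⟩, ⟨v, hv, hvb⟩, h4⟩
          exact ⟨h1, ⟨u, hu.1, hua⟩, ⟨v, hv.1, hvb⟩, h4⟩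
      exact L.zeroH_of_closedIn hClosedIn hGood
        (L.homologyZero_iff.mp (hreg x₁ hx₁)) hD

end CMVF

open CMVF

variable {R : Type*} [Ring R] {X : Type*} [Fintype X]

/-- Theorem: semi-equal index pairs of the same isolated invariant set have isomorphic
(relative) Lefschetz homology. -/
theorem semi_equal_index_pairs (L : Lefschetz R X) (F : MVField L)
    (hX : F.InvariantIn Set.univ Set.univ) (S : Set X) (hS : F.IsoInvIn Set.univ S)
    (P₁ P₂ Q₁ Q₂ : Set X) (hP : F.IndexPair S P₁ P₂) (hQ : F.IndexPair S Q₁ Q₂)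
    (h₁ : P₁ ⊆ Q₁) (h₂ : P₂ ⊆ Q₂) (hsemi : P₁ = Q₁ ∨ P₂ = Q₂) :
    ∀ k, Nonempty (L.homology (P₁ \ P₂) k ≃ₗ[R] L.homology (Q₁ \ Q₂) k) := by
  intro k
  obtain ⟨hP1c, hP2c, hP21, hP4, hP5, hP6⟩ := hP
  obtain ⟨hQ1c, hQ2c, hQ21, hQ4, hQ5, hQ6⟩ := hQ
  rcases hsemi with h12 | h22
  · -- Case `P₁ = Q₁` : the difference is `A = Q₂ \ P₂`, closed in `P₁ \ P₂`.
    set A := Q₂ \ P₂ with hAdef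
    have hcomp : ∀ x ∈ A, F.mclass x ⊆ A := by
      rintro x ⟨hxQ2, hxP2⟩
      have hxQ1 : x ∈ Q₁ := hQ21 hxQ2
      have hxP1 : x ∈ P₁ := by rw [h12]; exact hxQ1
      have hsQ1 : F.star x ∈ Q₁ := by
        by_cases hxs : x = F.star x
        · rwa [← hxs]
        · by_contra hsQ1
          refine hxP2 (hP5 x hxP1 ⟨F.star x, ?_, ?_⟩)
          · rw [F.pi_of_ne_star hxs]; rfl
          · rw [h12]; exact hsQ1
      have hsQ2 : F.star x ∈ Q₂ := by
        by_cases hxs : x = F.star x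
        · rwa [← hxs]
        · exact hQ4 x hxQ2 (F.star x) (by rw [F.pi_of_ne_star hxs]; rfl) hsQ1
      have hsP2 : F.star x ∉ P₂ := fun hsP2 =>
        hxP2 (L.mem_of_closed_of_le hP2c hsP2 (F.le_star (F.mem_mclass x)))
      intro y hy
      have hyQ2 : y ∈ Q₂ := L.mem_of_closed_of_le hQ2c hsQ2 (F.le_star hy)
      refine ⟨hyQ2, fun hyP2 => ?_⟩
      have hsy : F.star y = F.star x := F.star_eq_of_mclass_eq (F.mclass_eq_mclass_of_mem hy)
      by_cases hys : y = F.star x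
      · exact hsP2 (hys ▸ hyP2)
      · refine hsP2 (hP4 y hyP2 (F.star x) ?_ ?_)
        · rw [F.pi_of_ne_star (by rw [hsy]; exact hys), hsy]; rfl
        · rw [h12]; exact hsQ1
    have hsubA : A ⊆ P₁ \ P₂ := fun z hz => ⟨by rw [h12]; exact hQ21 hz.1, hz.2⟩
    have hClosedIn : L.ClosedIn A (P₁ \ P₂) := by
      refine ⟨hsubA, fun x hxA y hκ hyP => ?_⟩
      exact ⟨L.mem_of_closed_of_le hQ2c hxA.1 (L.le_facet hκ), hyP.2⟩
    have hGood : L.GoodS (P₁ \ P₂) := L.goodS_diff hP1c hP2c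
    obtain ⟨hreg, hacyc⟩ := dynamical_facts L F S (P₁ \ P₂) (Q₁ \ Q₂) A hsubA hcomp hP6 hQ6
      (fun x hx hx' => hx'.2 hx.1)
    have hZero : L.ZeroH A :=
      zeroH_of_regular L F A.ncard A le_rfl (L.goodS_diff hQ2c hP2c) hcomp hreg hacyc
    have hDeq : (P₁ \ P₂) \ A = Q₁ \ Q₂ := by
      ext z
      constructor
      · rintro ⟨⟨hz1, hz2⟩, hz3⟩
        exact ⟨by rw [← h12]; exact hz1, fun hzQ2 => hz3 ⟨hzQ2, hz2⟩⟩
      · rintro ⟨hz1, hz2⟩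
        exact ⟨⟨by rw [h12]; exact hz1, fun hzP2 => hz2 (h₂ hzP2)⟩, fun hzA => hz2 hzA.1⟩
    obtain ⟨e⟩ := L.homology_equiv_proj hClosedIn hGood hZero k
    exact ⟨hDeq ▸ e⟩
  · -- Case `P₂ = Q₂` : the difference is `A = Q₁ \ P₁`.
    set A := Q₁ \ P₁ with hAdef
    have hAnQ2 : ∀ x ∈ A, x ∉ Q₂ := fun x hx hxQ2 => hx.2 (hP21 (by rw [h22]; exact hxQ2))
    have hcomp : ∀ x ∈ A, F.mclass x ⊆ A := by
      rintro x ⟨hxQ1, hxP1⟩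
      have hxQ2 : x ∉ Q₂ := hAnQ2 x ⟨hxQ1, hxP1⟩
      have hsQ1 : F.star x ∈ Q₁ := by
        by_cases hxs : x = F.star x
        · rwa [← hxs]
        · by_contra hsQ1
          have hxQ2' : x ∈ Q₂ := hQ5 x hxQ1 ⟨F.star x, by rw [F.pi_of_ne_star hxs]; rfl, hsQ1⟩
          exact hxQ2 hxQ2'
      have hsP1 : F.star x ∉ P₁ := fun hsP1 =>
        hxP1 (L.mem_of_closed_of_le hP1c hsP1 (F.le_star (F.mem_mclass x)))
      intro y hy
      have hyQ1 : y ∈ Q₁ := L.mem_of_closed_of_le hQ1c hsQ1 (F.le_star hy)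
      refine ⟨hyQ1, fun hyP1 => ?_⟩
      have hsy : F.star y = F.star x := F.star_eq_of_mclass_eq (F.mclass_eq_mclass_of_mem hy)
      by_cases hys : y = F.star x
      · exact hsP1 (hys ▸ hyP1)
      · have hyP2 : y ∈ P₂ := hP5 y hyP1
          ⟨F.star x, by rw [F.pi_of_ne_star (by rw [hsy]; exact hys), hsy]; rfl, hsP1⟩
        have hyQ2 : y ∈ Q₂ := by rw [← h22]; exact hyP2
        have hsQ2 : F.star x ∈ Q₂ := hQ4 y hyQ2 (F.star x)
          (by rw [F.pi_of_ne_star (by rw [hsy]; exact hys), hsy]; rfl) hsQ1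
        exact hsP1 (hP21 (by rw [h22]; exact hsQ2))
    have hsubA : A ⊆ Q₁ \ Q₂ := fun z hz => ⟨hz.1, hAnQ2 z hz⟩
    have hClosedIn : L.ClosedIn (P₁ \ P₂) (Q₁ \ Q₂) := by
      constructor
      · rintro z ⟨hz1, hz2⟩
        exact ⟨h₁ hz1, fun hzQ2 => hz2 (by rw [h22]; exact hzQ2)⟩
      · rintro x ⟨hx1, hx2⟩ y hκ ⟨hy1, hy2⟩
        exact ⟨L.mem_of_closed_of_le hP1c hx1 (L.le_facet hκ),
          fun hyP2 => hy2 (by rw [← h22]; exact hyP2)⟩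
    have hGood : L.GoodS (Q₁ \ Q₂) := L.goodS_diff hQ1c hQ2c
    obtain ⟨hreg, hacyc⟩ := dynamical_facts L F S (Q₁ \ Q₂) (P₁ \ P₂) A hsubA hcomp hQ6 hP6
      (fun x hx hx' => hx.2 hx'.1)
    have hZero : L.ZeroH A :=
      zeroH_of_regular L F A.ncard A le_rfl (L.goodS_diff hQ1c hP1c) hcomp hreg hacyc
    have hDeq : (Q₁ \ Q₂) \ (P₁ \ P₂) = A := by
      ext z
      constructor
      · rintro ⟨⟨hz1, hz2⟩, hz3⟩
        refine ⟨hz1, fun hzP1 => hz3 ⟨hzP1, fun hzP2 => hz2 (by rw [← h22]; exact hzP2)⟩⟩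
      · rintro ⟨hz1, hz2⟩
        exact ⟨⟨hz1, hAnQ2 z ⟨hz1, hz2⟩⟩, fun hzP => hz2 hzP.1⟩
    have hD : L.ZeroH ((Q₁ \ Q₂) \ (P₁ \ P₂)) := by rw [hDeq]; exact hZero
    exact L.homology_equiv_incl hClosedIn hGood hD k
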